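/- If a distribution p on {1,...,N}³ satisfies the Finner inequality p(a,b,c) ≤ √(p(A=a)·p(B=b)·p(C=c)) and is fully symmetric, then p(A=B=C) = Σ_k p(k,k,k) ≤ 1/√N. In particular for N = 4, p(A=B=C) ≤ 1/2. -/
import Mathlib


/-- Finner inequality + full symmetry imply
p(A=B=C) ≤ 1/√N; in particular ≤ 1/2 for N = 4. -/
theorem stmt_2 (N : ℕ) (hN : 0 < N) (p : Fin N → Fin N → Fin N → ℝ)
    (hnn : ∀ a b c, 0 ≤ p a b c)
    (hsum : ∑ a : Fin N, ∑ b : Fin N, ∑ c : Fin N, p a b c = 1)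
    (hparty : ∀ a b c, p a b c = p b a c ∧ p a b c = p a c b)
    (houtcome : ∀ (σ : Equiv.Perm (Fin N)) a b c, p (σ a) (σ b) (σ c) = p a b c)
    (hfinner : ∀ a b c, p a b c ≤
      Real.sqrt ((∑ b' : Fin N, ∑ c' : Fin N, p a b' c') *
                 (∑ a' : Fin N, ∑ c' : Fin N, p a' b c') *
                 (∑ a' : Fin N, ∑ b' : Fin N, p a' b' c))) :
    (∑ k : Fin N, p k k k ≤ 1 / Real.sqrt N) ∧
    (N = 4 → ∑ k : Fin N, p k k k ≤ 1 / 2) := by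
  set m : Fin N → ℝ := fun a => ∑ b : Fin N, ∑ c : Fin N, p a b c with hm
  -- all A-marginals are equal
  have hmeq : ∀ a a' : Fin N, m a = m a' := by
    intro a a'
    have key : ∀ b c, p a b c = p a' (Equiv.swap a a' b) (Equiv.swap a a' c) := by
      intro b c
      have := houtcome (Equiv.swap a a') a b c
      rw [Equiv.swap_apply_left] at this
      exact this.symm
    calc m a = ∑ b : Fin N, ∑ c : Fin N, p a' (Equiv.swap a a' b) (Equiv.swap a a' c) := by
          simp only [hm]; exact Finset.sum_congr rfl fun b _ =>
            Finset.sum_congr rfl fun c _ => key b c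
      _ = m a' := by
          simp only [hm]
          rw [Fintype.sum_equiv (Equiv.swap a a') _ (fun b => ∑ c, p a' b c)]
          intro b
          exact Fintype.sum_equiv (Equiv.swap a a') _ _ (fun c => rfl)
  have hmval : ∀ a : Fin N, m a = 1 / N := by
    intro a
    have h1 : ∑ a' : Fin N, m a' = 1 := hsum
    have h2 : ∑ a' : Fin N, m a' = N * m a := by
      rw [Finset.sum_congr rfl fun a' _ => hmeq a' a]
      simp [Finset.card_univ, mul_comm]
    have hN' : (N : ℝ) ≠ 0 := Nat.cast_ne_zero.mpr hN.ne'
    field_simp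
    rw [h2] at h1
    linarith [h1]
  -- B and C marginals equal m
  have hB : ∀ b : Fin N, (∑ a' : Fin N, ∑ c' : Fin N, p a' b c') = m b := by
    intro b
    simp only [hm]
    exact Finset.sum_congr rfl fun a' _ => Finset.sum_congr rfl fun c' _ =>
      ((hparty a' b c').1).symm ▸ (hparty b a' c').1.symm
  have hC : ∀ c : Fin N, (∑ a' : Fin N, ∑ b' : Fin N, p a' b' c) = m c := by
    intro c
    simp only [hm]
    refine Finset.sum_congr rfl fun a' _ => Finset.sum_congr rfl fun b' _ => ?_
    rw [(hparty a' b' c).2, (hparty a' c b').1]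
  -- bound each diagonal term
  have hbound : ∀ k : Fin N, p k k k ≤ Real.sqrt ((1/N)^3) := by
    intro k
    have := hfinner k k k
    have hA : (∑ b' : Fin N, ∑ c' : Fin N, p k b' c') = m k := rfl
    rw [hA, hB k, hC k, hmval k] at this
    calc p k k k ≤ Real.sqrt (1/N * (1/N) * (1/N)) := this
      _ = Real.sqrt ((1/N)^3) := by ring_nf
  have hNpos : (0:ℝ) < N := Nat.cast_pos.mpr hN
  have hmain : ∑ k : Fin N, p k k k ≤ 1 / Real.sqrt N := by
    calc ∑ k : Fin N, p k k k ≤ ∑ k : Fin N, Real.sqrt ((1/N)^3) :=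
          Finset.sum_le_sum fun k _ => hbound k
      _ = N * Real.sqrt ((1/N)^3) := by simp [Finset.card_univ, mul_comm]
      _ = 1 / Real.sqrt N := by
          rw [show ((1:ℝ)/N)^3 = (1/N)^2 * (1/N) by ring,
            Real.sqrt_mul (by positivity), Real.sqrt_sq (by positivity),
            one_div, Real.sqrt_inv]
          have hs : Real.sqrt N ≠ 0 := by positivity
          field_simp
  refine ⟨hmain, fun h4 => ?_⟩
  subst h4
  have : Real.sqrt 4 = 2 := by
    rw [show (4:ℝ) = 2^2 by norm_num, Real.sqrt_sq (by norm_num)]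
  calc ∑ k : Fin 4, p k k k ≤ 1 / Real.sqrt 4 := by simpa using hmain
    _ = 1/2 := by rw [this]
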